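/- Let S = (F_{p^n},+,⋆) be a finite presemifield with x⋆y = F(x,y) additive in each argument, let F_q be a subfield of F_{p^n}, and suppose there exists a field automorphism σ of F_q such that F(λx, y) = σ(λ)·F(x,y) for all x,y ∈ F_{p^n} and all λ ∈ F_q (F is F_q-semilinear in x). Then for every λ ∈ F_q the scalar map t_λ : x ↦ λx belongs to the left-nucleus set N_l(S) := N_r(C^d) = {ν ∈ End_{F_p}(F_{p^n}) : ν∘ψ ∈ C^d for all ψ ∈ C^d}, and every element of N_l(S) is F_q-linear. -/

import Mathlib

structure Presemifield (p : ℕ) (S : Type*) [AddCommGroup S] [Module (ZMod p) S] where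
  mul : S →ₗ[ZMod p] S →ₗ[ZMod p] S
  eq_zero_or_eq_zero : ∀ x y : S, mul x y = 0 → x = 0 ∨ y = 0

def Presemifield.dualSpread {p : ℕ} {S : Type*} [AddCommGroup S] [Module (ZMod p) S]
    (M : Presemifield p S) : Set (S →ₗ[ZMod p] S) :=
  Set.range M.mul

def rightNucleusSet {p : ℕ} {S : Type*} [AddCommGroup S] [Module (ZMod p) S]
    (D : Set (S →ₗ[ZMod p] S)) : Set (S →ₗ[ZMod p] S) :=
  {ν | ∀ ψ ∈ D, ν ∘ₗ ψ ∈ D}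

section Aux
variable {p : ℕ} {S : Type*} [AddCommGroup S] [Module (ZMod p) S]

/-- Left multiplication by a nonzero element is bijective (for finite `S`). -/
lemma Presemifield.mul_bijective [Finite S] (M : Presemifield p S) {x : S} (hx : x ≠ 0) :
    Function.Bijective (M.mul x) := by
  have hinj : Function.Injective (M.mul x) := by
    intro a b hab
    have : M.mul x (a - b) = 0 := by simp [map_sub, hab]
    rcases M.eq_zero_or_eq_zero _ _ this with h | h
    · exact absurd h hx
    · exact sub_eq_zero.mp h
  exact ⟨hinj, Finite.surjective_of_injective hinj⟩

/-- Every nonzero element of the right nucleus of the dual spread set is bijective. -/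
lemma Presemifield.nuc_bijective [Finite S] [Nontrivial S] (M : Presemifield p S)
    {ν : S →ₗ[ZMod p] S} (hν : ν ∈ rightNucleusSet M.dualSpread) (h0 : ν ≠ 0) :
    Function.Bijective ν := by
  obtain ⟨e, he⟩ := exists_ne (0 : S)
  obtain ⟨b, hb⟩ := hν (M.mul e) ⟨e, rfl⟩
  have hsurj1 : Function.Surjective (M.mul e) := (M.mul_bijective he).2
  have hbne : b ≠ 0 := by
    rintro rfl
    apply h0
    ext z
    obtain ⟨y, rfl⟩ := hsurj1 z
    have := LinearMap.congr_fun hb y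
    simpa using this.symm
  have hinj : Function.Injective ν := by
    rw [injective_iff_map_eq_zero]
    intro z hz
    obtain ⟨y, rfl⟩ := hsurj1 z
    have : M.mul b y = 0 := by
      have := LinearMap.congr_fun hb y
      simp only [LinearMap.comp_apply] at this
      rw [this, hz]
    rcases M.eq_zero_or_eq_zero _ _ this with h | h
    · exact absurd h hbne
    · simp [h]
  exact ⟨hinj, Finite.surjective_of_injective hinj⟩

/-- The right nucleus of the dual spread set as a subring of the endomorphism ring. -/
def Presemifield.nuc (M : Presemifield p S) : Subring (Module.End (ZMod p) S) where
  carrier := rightNucleusSet M.dualSpread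
  zero_mem' := fun ψ _ => ⟨0, by ext y; simp⟩
  one_mem' := fun ψ hψ => by simpa [Module.End.one_eq_id] using hψ
  add_mem' := by
    rintro a b ha hb ψ hψ
    obtain ⟨u, hu⟩ := ha ψ hψ
    obtain ⟨v, hv⟩ := hb ψ hψ
    exact ⟨u + v, by ext y; simp [hu, hv]⟩
  neg_mem' := by
    rintro a ha ψ hψ
    obtain ⟨u, hu⟩ := ha ψ hψ
    exact ⟨-u, by ext y; simp [hu]⟩
  mul_mem' := by
    rintro a b ha hb ψ hψ
    have := ha _ (hb ψ hψ)
    simpa [Module.End.mul_eq_comp, LinearMap.comp_assoc] using this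

end Aux

theorem statement10 (p n : ℕ) [Fact p.Prime] (hn : n ≠ 0)
    (M : Presemifield p (GaloisField p n))
    (K : Subfield (GaloisField p n)) (σ : K ≃+* K)
    (hσ : ∀ (l : K) (x y : GaloisField p n),
      M.mul ((l : GaloisField p n) * x) y = (σ l : GaloisField p n) * M.mul x y) :
    (∀ l : K, LinearMap.mulLeft (ZMod p) (l : GaloisField p n) ∈
      rightNucleusSet M.dualSpread) ∧
    (∀ ν ∈ rightNucleusSet M.dualSpread, ∀ (l : K) (x : GaloisField p n),
      ν ((l : GaloisField p n) * x) = (l : GaloisField p n) * ν x) := by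
  have part1 : ∀ l : K, LinearMap.mulLeft (ZMod p) (l : GaloisField p n) ∈
      rightNucleusSet M.dualSpread := by
    intro l ψ hψ
    obtain ⟨x, rfl⟩ := hψ
    refine ⟨(σ.symm l : GaloisField p n) * x, ?_⟩
    ext y
    have := hσ (σ.symm l) x y
    simp only [RingEquiv.apply_symm_apply] at this
    simp [this]
  refine ⟨part1, ?_⟩
  intro ν hν l x
  haveI : Finite (Module.End (ZMod p) (GaloisField p n)) :=
    Finite.of_injective _ DFunLike.coe_injective
  haveI : Nontrivial ↥M.nuc := by
    refine ⟨0, 1, fun h => ?_⟩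
    have := congrFun (congrArg (fun a : ↥M.nuc => ((a : Module.End (ZMod p) (GaloisField p n)) :
      GaloisField p n → GaloisField p n)) h) 1
    simp at this
  haveI : NoZeroDivisors ↥M.nuc := by
    constructor
    rintro ⟨a, ha⟩ ⟨b, hb⟩ hab
    by_cases hbz : b = 0
    · right; exact Subtype.ext hbz
    · left
      have hbsurj := (M.nuc_bijective hb hbz).2
      have hcomp : a ∘ₗ b = 0 := congrArg Subtype.val hab
      refine Subtype.ext ?_
      ext z
      obtain ⟨y, rfl⟩ := hbsurj z
      have := LinearMap.congr_fun hcomp y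
      simpa using this
  haveI : IsDomain ↥M.nuc := NoZeroDivisors.to_isDomain _
  have hfield := Finite.isDomain_to_isField ↥M.nuc
  have hcomm := hfield.mul_comm ⟨ν, hν⟩ ⟨LinearMap.mulLeft (ZMod p) (l : GaloisField p n), part1 l⟩
  have hcomm' : ν ∘ₗ LinearMap.mulLeft (ZMod p) (l : GaloisField p n)
      = LinearMap.mulLeft (ZMod p) (l : GaloisField p n) ∘ₗ ν := congrArg Subtype.val hcomm
  have := LinearMap.congr_fun hcomm' x
  simpa using this
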